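/- Let d ≥ 1 and s ≥ d + 1, and let Φ : [1, ∞) → (0, ∞) be non-increasing with limit 0 at infinity, satisfying liminf_{T→∞} Φ(2T)/Φ(T) > 0 and ∑_{m=1}^∞ 2^{m d (s+1)} Φ(2^m)^{s−d} < ∞. Then for Lebesgue-almost every s-tuple Θ = (θ₁, …, θ_s) ∈ (ℝ^d)^s there exists c = c(Θ) > 0 such that Θ is uniformly Diophantine of type c·Φ. -/

import Mathlib

open Module Set MeasureTheory

open scoped ENNReal

noncomputable section

/-- Distance from a real number to the nearest integer. -/
def intDist (x : ℝ) : ℝ := |x - round x|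

/-- `Θ = (θ₁, …, θ_s)` is *uniformly Diophantine of type `Φ`*: for every `T ≥ 1` and
every `ξ ∈ ℝ^d` there is an index `i` such that for all nonzero `u ∈ ℤ^d` with
`‖u‖_∞ ≤ T`, the distance from `u·(ξ - θᵢ)` to the nearest integer is at least
`Φ T`. -/
def UniformlyDiophantine (d s : ℕ) (Φ : ℝ → ℝ) (θ : Fin s → Fin d → ℝ) : Prop :=
  ∀ T : ℝ, 1 ≤ T → ∀ ξ : Fin d → ℝ, ∃ i : Fin s,
    ∀ u : Fin d → ℤ, u ≠ 0 → (∀ j, (|u j| : ℝ) ≤ T) →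
      Φ T ≤ intDist (∑ j, (u j : ℝ) * (ξ j - θ i j))

lemma intDist_nonneg (x : ℝ) : 0 ≤ intDist x := abs_nonneg _

lemma intDist_le_abs_sub_int (x : ℝ) (k : ℤ) : intDist x ≤ |x - k| := round_le x k

lemma intDist_add_int (x : ℝ) (n : ℤ) : intDist (x + n) = intDist x := by
  unfold intDist
  rw [round_add_intCast]
  push_cast
  ring_nf

lemma intDist_le_intDist_add_abs (x y : ℝ) : intDist y ≤ intDist x + |y - x| := by
  have h1 : intDist y ≤ |y - round x| := round_le y (round x)
  have h2 : |y - (round x : ℝ)| ≤ |y - x| + |x - round x| := abs_sub_le _ _ _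
  unfold intDist at *
  linarith

lemma measurable_round : Measurable (fun x : ℝ => round x) := by
  have : (fun x : ℝ => round x) = fun x : ℝ => ⌊x + 1/2⌋ := by
    funext x; exact round_eq x
  rw [this]
  exact Int.measurable_floor.comp (measurable_id.add_const _)

lemma measurable_intDist : Measurable intDist := by
  unfold intDist
  apply Measurable.abs
  exact measurable_id.sub ((measurable_from_top (f := (Int.cast : ℤ → ℝ))).comp measurable_round)


lemma slab_one_dim (w : ℤ) (hw : w ≠ 0) (a b η : ℝ) (hη : 0 < η) :
    volume {t : ℝ | t ∈ Set.Ico b (b + 1) ∧ intDist (a + w * t) < η} ≤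
      ENNReal.ofReal ((2 + 2 * η) * (2 * η)) := by
  set W : ℝ := |(w : ℝ)| with hWdef
  have hW : 1 ≤ W := by
    have : (1 : ℤ) ≤ |w| := Int.one_le_abs hw
    calc (1:ℝ) ≤ ((|w| : ℤ) : ℝ) := by exact_mod_cast this
    _ = W := by push_cast; rfl
  have hWpos : 0 < W := lt_of_lt_of_le one_pos hW
  have hw0 : (w : ℝ) ≠ 0 := Int.cast_ne_zero.mpr hw
  set c : ℝ := a + w * b + w / 2
  set r : ℝ := W / 2 + η
  have hsub : {t : ℝ | t ∈ Set.Ico b (b + 1) ∧ intDist (a + w * t) < η} ⊆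
      ⋃ k ∈ Finset.Icc ⌈c - r⌉ ⌊c + r⌋, Metric.ball (((k : ℝ) - a) / w) (η / W) := by
    rintro t ⟨⟨hb1, hb2⟩, hd⟩
    set k : ℤ := round (a + w * t) with hk
    have hdk : |a + w * t - k| < η := hd
    have ht : |t - b - 1/2| ≤ 1/2 := by
      rw [abs_le]; constructor <;> linarith
    have hkc : |(k : ℝ) - c| < r := by
      have h1 : (k:ℝ) - c = -(a + w * t - k) + w * (t - b - 1/2) := by
        simp only [c]; ring
      rw [h1]
      calc |(-(a + w * t - k) + w * (t - b - 1/2))|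
          ≤ |(-(a + w * t - k))| + |w * (t - b - 1/2)| := abs_add_le _ _
        _ = |a + w * t - k| + W * |t - b - 1/2| := by rw [abs_neg, abs_mul]
        _ < η + W * (1/2) := by
            have : W * |t - b - 1/2| ≤ W * (1/2) := by
              apply mul_le_mul_of_nonneg_left ht hWpos.le
            linarith
        _ = r := by simp only [r]; ring
    rw [abs_sub_lt_iff] at hkc
    apply Set.mem_biUnion (show k ∈ Finset.Icc ⌈c - r⌉ ⌊c + r⌋ by
      rw [Finset.mem_Icc]
      constructor
      · exact Int.ceil_le.mpr (by linarith)
      · exact Int.le_floor.mpr (by linarith))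
    rw [Metric.mem_ball, Real.dist_eq]
    have : t - ((k:ℝ) - a) / w = (a + w * t - k) / w := by field_simp; ring
    rw [this, abs_div]
    exact (div_lt_div_iff_of_pos_right hWpos).mpr hdk
  calc volume {t : ℝ | t ∈ Set.Ico b (b + 1) ∧ intDist (a + w * t) < η}
      ≤ volume (⋃ k ∈ Finset.Icc ⌈c - r⌉ ⌊c + r⌋, Metric.ball (((k : ℝ) - a) / w) (η / W)) :=
        measure_mono hsub
    _ ≤ ∑ k ∈ Finset.Icc ⌈c - r⌉ ⌊c + r⌋, volume (Metric.ball (((k : ℝ) - a) / w) (η / W)) :=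
        measure_biUnion_finset_le _ _
    _ = (Finset.Icc ⌈c - r⌉ ⌊c + r⌋).card • ENNReal.ofReal (2 * (η / W)) := by
        simp [Real.volume_ball]
    _ ≤ ENNReal.ofReal ((2 + 2 * η) * (2 * η)) := by
        rw [nsmul_eq_mul, ← ENNReal.ofReal_natCast, ← ENNReal.ofReal_mul (by positivity)]
        apply ENNReal.ofReal_le_ofReal
        have hcard : ((Finset.Icc ⌈c - r⌉ ⌊c + r⌋).card : ℝ) ≤ 2 * r + 1 := by
          rw [Int.card_Icc]
          rcases le_or_gt 0 (⌊c + r⌋ + 1 - ⌈c - r⌉) with h | h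
          · have h2 : ((⌊c + r⌋ : ℤ) : ℝ) ≤ c + r := Int.floor_le _
            have h1 : c - r ≤ ((⌈c - r⌉ : ℤ) : ℝ) := Int.le_ceil _
            have := Int.toNat_of_nonneg h
            have hcast : (((⌊c + r⌋ + 1 - ⌈c - r⌉).toNat : ℤ) : ℝ) = ((⌊c + r⌋ : ℤ) : ℝ) + 1 - ((⌈c - r⌉ : ℤ) : ℝ) := by
              rw [this]; push_cast; ring
            have : (((⌊c + r⌋ + 1 - ⌈c - r⌉).toNat : ℕ) : ℝ) = (((⌊c + r⌋ + 1 - ⌈c - r⌉).toNat : ℤ) : ℝ) := by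
              push_cast; rfl
            rw [this, hcast]; linarith
          · have : (⌊c + r⌋ + 1 - ⌈c - r⌉).toNat = 0 := Int.toNat_of_nonpos h.le
            rw [this]
            have : (0:ℝ) < r := by positivity
            norm_num; linarith
        calc ((Finset.Icc ⌈c - r⌉ ⌊c + r⌋).card : ℝ) * (2 * (η / W))
            ≤ (2 * r + 1) * (2 * (η / W)) := by
              apply mul_le_mul_of_nonneg_right hcard (by positivity)
          _ ≤ (2 + 2 * η) * (2 * η) := by
              have h1 : 2 * r + 1 = W + 2 * η + 1 := by simp only [r]; ring
              rw [h1]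
              rw [div_eq_mul_inv]
              have hWinv : W⁻¹ ≤ 1 := by
                rw [inv_le_one_iff₀]; right; exact hW
              have key : (W + 2 * η + 1) * (2 * (η * W⁻¹)) ≤ (2 + 2 * η) * (2 * η) := by
                have e1 : (W + 2 * η + 1) * (2 * (η * W⁻¹)) = (1 + (2*η+1) * W⁻¹) * (2 * η) := by
                  field_simp; ring
                rw [e1]
                apply mul_le_mul_of_nonneg_right _ (by positivity)
                have : (2*η+1) * W⁻¹ ≤ (2*η+1) * 1 := by
                  apply mul_le_mul_of_nonneg_left hWinv (by positivity)
                linarith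
              exact key


lemma slab_dim {n : ℕ} (u : Fin (n+1) → ℤ) (j : Fin (n+1)) (hj : u j ≠ 0)
    (ξ q : Fin (n+1) → ℝ) (η : ℝ) (hη : 0 < η) :
    volume {θ : Fin (n+1) → ℝ | (∀ j', θ j' ∈ Set.Ico (q j') (q j' + 1)) ∧
        intDist (∑ j', (u j' : ℝ) * (ξ j' - θ j')) < η} ≤
      ENNReal.ofReal ((2 + 2 * η) * (2 * η)) := by
  set w : ℤ := -u j with hwdef
  have hw : w ≠ 0 := neg_ne_zero.mpr hj
  set g : (Fin n → ℝ) → ℝ :=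
    fun y => (u j : ℝ) * ξ j + ∑ k, (u (j.succAbove k) : ℝ) * (ξ (j.succAbove k) - y k) with hgdef
  have hg : Measurable g := by
    apply Measurable.add measurable_const
    apply Finset.measurable_sum
    intro k _
    exact (measurable_const.sub (measurable_pi_apply k)).const_mul _
  set A : Set (ℝ × (Fin n → ℝ)) :=
    {p | p.1 ∈ Set.Ico (q j) (q j + 1) ∧
      (∀ k, p.2 k ∈ Set.Ico (q (j.succAbove k)) (q (j.succAbove k) + 1)) ∧
      intDist (g p.2 + (w : ℝ) * p.1) < η} with hAdef
  have hA : MeasurableSet A := by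
    have hAeq : A = (Prod.fst ⁻¹' Set.Ico (q j) (q j + 1)) ∩
        ((Prod.snd ⁻¹' Set.pi Set.univ fun k => Set.Ico (q (j.succAbove k)) (q (j.succAbove k) + 1)) ∩
        {p : ℝ × (Fin n → ℝ) | intDist (g p.2 + (w : ℝ) * p.1) < η}) := by
      ext p
      simp only [hAdef, Set.mem_setOf_eq, Set.mem_inter_iff, Set.mem_preimage, Set.mem_pi,
        Set.mem_univ, forall_true_left]
    rw [hAeq]
    exact (measurable_fst measurableSet_Ico).inter
      ((measurable_snd (MeasurableSet.univ_pi fun k => measurableSet_Ico)).inter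
        (measurableSet_lt (measurable_intDist.comp
          ((hg.comp measurable_snd).add (measurable_fst.const_mul _))) measurable_const))
  have e := MeasurableEquiv.piFinSuccAbove (fun _ : Fin (n+1) => ℝ) j
  have hpre : {θ : Fin (n+1) → ℝ | (∀ j', θ j' ∈ Set.Ico (q j') (q j' + 1)) ∧
        intDist (∑ j', (u j' : ℝ) * (ξ j' - θ j')) < η}
      = (MeasurableEquiv.piFinSuccAbove (fun _ : Fin (n+1) => ℝ) j) ⁻¹' A := by
    ext θ
    have hsum : (∑ j', (u j' : ℝ) * (ξ j' - θ j'))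
        = g (fun k => θ (j.succAbove k)) + (w : ℝ) * θ j := by
      rw [Fin.sum_univ_succAbove (fun j' => (u j' : ℝ) * (ξ j' - θ j')) j]
      simp only [hgdef, hwdef]
      push_cast
      ring
    simp only [Set.mem_preimage, Set.mem_setOf_eq, hAdef, MeasurableEquiv.piFinSuccAbove_apply,
      Fin.insertNthEquiv_symm_apply, Fin.removeNth]
    rw [hsum, Fin.forall_iff_succAbove j]
    tauto
  rw [hpre]
  have hmp := measurePreserving_piFinSuccAbove (fun _ : Fin (n+1) => (volume : Measure ℝ)) j
  set B := ENNReal.ofReal ((2 + 2 * η) * (2 * η)) with hB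
  set C : Set (Fin n → ℝ) := Set.pi Set.univ fun k => Set.Ico (q (j.succAbove k)) (q (j.succAbove k) + 1) with hC
  have hCmeas : MeasurableSet C := MeasurableSet.univ_pi fun k => measurableSet_Ico
  calc volume ((MeasurableEquiv.piFinSuccAbove (fun _ : Fin (n+1) => ℝ) j) ⁻¹' A)
      = ((volume : Measure ℝ).prod (Measure.pi fun _ : Fin n => volume)) A := by
        rw [volume_pi]
        exact hmp.measure_preimage hA.nullMeasurableSet
    _ = ∫⁻ y, volume ((fun x => (x, y)) ⁻¹' A) ∂(Measure.pi fun _ : Fin n => volume) :=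
        Measure.prod_apply_symm hA
    _ ≤ ∫⁻ y, C.indicator (fun _ => B) y ∂(Measure.pi fun _ : Fin n => volume) := by
        apply lintegral_mono
        intro y
        by_cases hy : ∀ k, y k ∈ Set.Ico (q (j.succAbove k)) (q (j.succAbove k) + 1)
        · have hsub : ((fun x => (x, y)) ⁻¹' A) ⊆
              {t : ℝ | t ∈ Set.Ico (q j) (q j + 1) ∧ intDist (g y + (w : ℝ) * t) < η} :=
            fun t ht => ⟨ht.1, ht.2.2⟩
          have hyC : y ∈ C := by rw [hC, Set.mem_univ_pi]; exact hy
          rw [Set.indicator_of_mem hyC]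
          exact le_trans (measure_mono hsub) (slab_one_dim w hw (g y) (q j) η hη)
        · refine le_trans (measure_mono (fun t ht => ((hy ht.2.1).elim : t ∈ (∅ : Set ℝ)))) ?_
          simp
    _ = B * (Measure.pi fun _ : Fin n => volume) C := lintegral_indicator_const hCmeas B
    _ = B := by
        have : (Measure.pi fun _ : Fin n => volume) C = 1 := by
          rw [hC, Measure.pi_pi]
          simp [Real.volume_Ico]
        rw [this, mul_one]


lemma Sset_vol {n : ℕ} (T : ℤ) (hT : 1 ≤ T) (ξ q : Fin (n+1) → ℝ) (η : ℝ) (hη : 0 < η) :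
    volume {θ : Fin (n+1) → ℝ | (∀ j', θ j' ∈ Set.Ico (q j') (q j' + 1)) ∧
        ∃ u : Fin (n+1) → ℤ, u ≠ 0 ∧ (∀ j, (|u j| : ℝ) ≤ (T : ℝ)) ∧
          intDist (∑ j', (u j' : ℝ) * (ξ j' - θ j')) < η} ≤
      (((2*T+1).toNat ^ (n+1) : ℕ) : ℝ≥0∞) * ENNReal.ofReal ((2 + 2 * η) * (2 * η)) := by
  classical
  set U : Finset (Fin (n+1) → ℤ) :=
    (Fintype.piFinset fun _ : Fin (n+1) => Finset.Icc (-T) T).erase 0 with hU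
  have hsub : {θ : Fin (n+1) → ℝ | (∀ j', θ j' ∈ Set.Ico (q j') (q j' + 1)) ∧
        ∃ u : Fin (n+1) → ℤ, u ≠ 0 ∧ (∀ j, (|u j| : ℝ) ≤ (T : ℝ)) ∧
          intDist (∑ j', (u j' : ℝ) * (ξ j' - θ j')) < η} ⊆
      ⋃ u ∈ U, {θ : Fin (n+1) → ℝ | (∀ j', θ j' ∈ Set.Ico (q j') (q j' + 1)) ∧
        intDist (∑ j', (u j' : ℝ) * (ξ j' - θ j')) < η} := by
    rintro θ ⟨hcube, u, hu0, hub, hd⟩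
    have huU : u ∈ U := by
      rw [hU, Finset.mem_erase]
      refine ⟨hu0, ?_⟩
      rw [Fintype.mem_piFinset]
      intro j
      rw [Finset.mem_Icc, ← abs_le]
      exact_mod_cast hub j
    exact Set.mem_biUnion huU ⟨hcube, hd⟩
  calc volume _ ≤ volume (⋃ u ∈ U, {θ : Fin (n+1) → ℝ |
          (∀ j', θ j' ∈ Set.Ico (q j') (q j' + 1)) ∧
          intDist (∑ j', (u j' : ℝ) * (ξ j' - θ j')) < η}) := measure_mono hsub
    _ ≤ ∑ u ∈ U, volume {θ : Fin (n+1) → ℝ |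
          (∀ j', θ j' ∈ Set.Ico (q j') (q j' + 1)) ∧
          intDist (∑ j', (u j' : ℝ) * (ξ j' - θ j')) < η} := measure_biUnion_finset_le _ _
    _ ≤ ∑ _u ∈ U, ENNReal.ofReal ((2 + 2 * η) * (2 * η)) := by
        apply Finset.sum_le_sum
        intro u huU
        have hu0 : u ≠ 0 := (Finset.mem_erase.mp huU).1
        obtain ⟨j, hj⟩ := Function.ne_iff.mp hu0
        exact slab_dim u j hj ξ q η hη
    _ = (U.card : ℝ≥0∞) * ENNReal.ofReal ((2 + 2 * η) * (2 * η)) := by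
        rw [Finset.sum_const, nsmul_eq_mul]
    _ ≤ (((2*T+1).toNat ^ (n+1) : ℕ) : ℝ≥0∞) * ENNReal.ofReal ((2 + 2 * η) * (2 * η)) := by
        apply mul_le_mul_left
        have hcard : U.card ≤ (2*T+1).toNat ^ (n+1) := by
          calc U.card ≤ (Fintype.piFinset fun _ : Fin (n+1) => Finset.Icc (-T) T).card :=
                Finset.card_erase_le
            _ = ∏ _j : Fin (n+1), (Finset.Icc (-T) T).card := Fintype.card_piFinset _
            _ = (2*T+1).toNat ^ (n+1) := by
                rw [Int.card_Icc]
                norm_num [Finset.prod_const]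
                ring_nf
        exact_mod_cast hcard
  done


lemma Bm_vol {n s : ℕ} (ε : ℝ) (hε : 0 < ε) (Tz : ℤ) (hT : 1 ≤ Tz)
    (q : Fin s → Fin (n+1) → ℝ) (N : ℕ) (hN1 : 1 ≤ N)
    (hNge : ((n : ℝ) + 1) * (Tz : ℝ) / ε ≤ (N : ℝ)) :
    volume {θ : Fin s → Fin (n+1) → ℝ |
        (∀ i j, θ i j ∈ Set.Ico (q i j) (q i j + 1)) ∧
        ∃ ξ : Fin (n+1) → ℝ, ∀ i, ∃ u : Fin (n+1) → ℤ, u ≠ 0 ∧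
          (∀ j, (|u j| : ℝ) ≤ (Tz : ℝ)) ∧
          intDist (∑ j, (u j : ℝ) * (ξ j - θ i j)) < ε} ≤
      ((N ^ (n+1) : ℕ) : ℝ≥0∞) *
        ((((2*Tz+1).toNat ^ (n+1) : ℕ) : ℝ≥0∞) *
          ENNReal.ofReal ((2 + 2 * (2*ε)) * (2 * (2*ε)))) ^ s := by
  classical
  set G : Finset (Fin (n+1) → ℕ) :=
    Fintype.piFinset fun _ : Fin (n+1) => Finset.range N with hG
  set Sset : (Fin (n+1) → ℝ) → (Fin (n+1) → ℝ) → Set (Fin (n+1) → ℝ) :=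
    fun ξ₀ qq => {θ : Fin (n+1) → ℝ | (∀ j', θ j' ∈ Set.Ico (qq j') (qq j' + 1)) ∧
        ∃ u : Fin (n+1) → ℤ, u ≠ 0 ∧ (∀ j, (|u j| : ℝ) ≤ (Tz : ℝ)) ∧
          intDist (∑ j', (u j' : ℝ) * (ξ₀ j' - θ j')) < 2*ε} with hSset
  have hNpos : (0:ℝ) < N := by exact_mod_cast hN1
  have hsub : {θ : Fin s → Fin (n+1) → ℝ |
        (∀ i j, θ i j ∈ Set.Ico (q i j) (q i j + 1)) ∧
        ∃ ξ : Fin (n+1) → ℝ, ∀ i, ∃ u : Fin (n+1) → ℤ, u ≠ 0 ∧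
          (∀ j, (|u j| : ℝ) ≤ (Tz : ℝ)) ∧
          intDist (∑ j, (u j : ℝ) * (ξ j - θ i j)) < ε} ⊆
      ⋃ a ∈ G, Set.pi Set.univ (fun i => Sset (fun j => (a j : ℝ) / N) (q i)) := by
    rintro θ ⟨hcube, ξ, hξ⟩
    set ξ' : Fin (n+1) → ℝ := fun j => Int.fract (ξ j) with hξ'
    set a : Fin (n+1) → ℕ := fun j => ⌊ξ' j * N⌋₊ with ha
    have haG : a ∈ G := by
      rw [hG, Fintype.mem_piFinset]
      intro j
      rw [Finset.mem_range]
      have hf0 : 0 ≤ ξ' j := Int.fract_nonneg _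
      have h1 : ξ' j * N < N := by
        have : ξ' j < 1 := Int.fract_lt_one _
        nlinarith
      have hlt := (Nat.floor_lt (n := N) (mul_nonneg hf0 hNpos.le)).mpr (by exact_mod_cast h1)
      rw [ha]
      exact hlt
    have hclose : ∀ j, |(a j : ℝ) / N - ξ' j| ≤ 1 / N := by
      intro j
      have hf0 : 0 ≤ ξ' j := Int.fract_nonneg _
      have h0 : (0:ℝ) ≤ ξ' j * N := mul_nonneg hf0 hNpos.le
      have h1 : (a j : ℝ) ≤ ξ' j * N := Nat.floor_le h0
      have h2 : ξ' j * N < a j + 1 := Nat.lt_floor_add_one _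
      have heq : (a j : ℝ) / N - ξ' j = ((a j : ℝ) - ξ' j * N) / N := by
        field_simp
      have habs : |(a j : ℝ) - ξ' j * N| ≤ 1 := by
        rw [abs_le]; constructor <;> linarith
      rw [heq, abs_div, abs_of_pos hNpos]
      gcongr
    apply Set.mem_biUnion haG
    rw [Set.mem_univ_pi]
    intro i
    obtain ⟨u, hu0, hub, hd⟩ := hξ i
    refine ⟨fun j => hcube i j, u, hu0, hub, ?_⟩
    -- step 1 : value at ξ'
    have hstep1 : intDist (∑ j, (u j : ℝ) * (ξ' j - θ i j)) < ε := by
      have hsum : (∑ j, (u j : ℝ) * (ξ' j - θ i j))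
          = (∑ j, (u j : ℝ) * (ξ j - θ i j)) + ((- ∑ j, u j * ⌊ξ j⌋ : ℤ) : ℝ) := by
        have hterm : ∀ j : Fin (n+1), (u j : ℝ) * (ξ' j - θ i j)
            = (u j : ℝ) * (ξ j - θ i j) - (u j : ℝ) * ((⌊ξ j⌋ : ℤ) : ℝ) := by
          intro j
          rw [hξ']
          simp only [Int.fract]
          ring
        rw [Finset.sum_congr rfl (fun j _ => hterm j), Finset.sum_sub_distrib]
        push_cast
        ring
      rw [hsum, intDist_add_int]
      exact hd
    -- step 2 : move to grid point
    have hstep2 : |(∑ j, (u j : ℝ) * ((fun j => (a j : ℝ) / N) j - θ i j))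
        - ∑ j, (u j : ℝ) * (ξ' j - θ i j)| ≤ ε := by
      have hdiff : (∑ j, (u j : ℝ) * ((a j : ℝ) / N - θ i j))
          - ∑ j, (u j : ℝ) * (ξ' j - θ i j) = ∑ j, (u j : ℝ) * ((a j : ℝ) / N - ξ' j) := by
        rw [← Finset.sum_sub_distrib]
        apply Finset.sum_congr rfl
        intro j _
        ring
      rw [hdiff]
      calc |∑ j, (u j : ℝ) * ((a j : ℝ) / N - ξ' j)|
          ≤ ∑ j, |(u j : ℝ) * ((a j : ℝ) / N - ξ' j)| := Finset.abs_sum_le_sum_abs _ _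
        _ ≤ ∑ _j : Fin (n+1), (Tz : ℝ) * (1 / N) := by
            apply Finset.sum_le_sum
            intro j _
            rw [abs_mul]
            apply mul_le_mul (hub j) (hclose j) (abs_nonneg _)
              (le_trans (abs_nonneg _) (hub j))
        _ = ((n : ℝ) + 1) * ((Tz : ℝ) * (1 / N)) := by
            rw [Finset.sum_const]
            simp [Finset.card_univ]
        _ ≤ ε := by
            have h := (div_le_iff₀ hε).mp hNge
            rw [mul_one_div, ← mul_div_assoc, div_le_iff₀ hNpos]
            nlinarith
    calc intDist (∑ j, (u j : ℝ) * ((fun j => (a j : ℝ) / N) j - θ i j))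
        ≤ intDist (∑ j, (u j : ℝ) * (ξ' j - θ i j))
          + |(∑ j, (u j : ℝ) * ((fun j => (a j : ℝ) / N) j - θ i j))
            - ∑ j, (u j : ℝ) * (ξ' j - θ i j)| := intDist_le_intDist_add_abs _ _
      _ < ε + ε := by
          apply add_lt_add_of_lt_of_le hstep1 hstep2
      _ = 2 * ε := by ring
  calc volume _ ≤ volume (⋃ a ∈ G, Set.pi Set.univ
        (fun i => Sset (fun j => (a j : ℝ) / N) (q i))) := measure_mono hsub
    _ ≤ ∑ a ∈ G, volume (Set.pi Set.univ
        (fun i => Sset (fun j => (a j : ℝ) / N) (q i))) := measure_biUnion_finset_le _ _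
    _ ≤ ∑ _a ∈ G, ((((2*Tz+1).toNat ^ (n+1) : ℕ) : ℝ≥0∞) *
          ENNReal.ofReal ((2 + 2 * (2*ε)) * (2 * (2*ε)))) ^ s := by
        apply Finset.sum_le_sum
        intro a _
        rw [volume_pi_pi]
        calc ∏ i : Fin s, volume (Sset (fun j => (a j : ℝ) / N) (q i))
            ≤ ∏ _i : Fin s, ((((2*Tz+1).toNat ^ (n+1) : ℕ) : ℝ≥0∞) *
                ENNReal.ofReal ((2 + 2 * (2*ε)) * (2 * (2*ε)))) := by
              apply Finset.prod_le_prod'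
              intro i _
              exact Sset_vol Tz hT _ (q i) (2*ε) (by positivity)
          _ = ((((2*Tz+1).toNat ^ (n+1) : ℕ) : ℝ≥0∞) *
                ENNReal.ofReal ((2 + 2 * (2*ε)) * (2 * (2*ε)))) ^ s := by
              rw [Finset.prod_const, Finset.card_univ, Fintype.card_fin]
    _ = (G.card : ℝ≥0∞) * ((((2*Tz+1).toNat ^ (n+1) : ℕ) : ℝ≥0∞) *
          ENNReal.ofReal ((2 + 2 * (2*ε)) * (2 * (2*ε)))) ^ s := by
        rw [Finset.sum_const, nsmul_eq_mul]
    _ ≤ ((N ^ (n+1) : ℕ) : ℝ≥0∞) * ((((2*Tz+1).toNat ^ (n+1) : ℕ) : ℝ≥0∞) *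
          ENNReal.ofReal ((2 + 2 * (2*ε)) * (2 * (2*ε)))) ^ s := by
        apply mul_le_mul_left
        have : G.card = N ^ (n+1) := by
          rw [hG, Fintype.card_piFinset]
          simp [Finset.card_range]
        rw [this]


lemma real_bound {n s : ℕ} (hs : n + 2 ≤ s) (E ε : ℝ) (hε : 0 < ε) (hεE : ε ≤ E) (m : ℕ) :
    ((⌈((n:ℝ)+1) * (((2:ℤ)^(m+1) : ℤ) : ℝ) / ε⌉₊ : ℝ)) ^ (n+1) *
      ((((2*2^(m+1)+1 : ℤ).toNat : ℝ)) ^ (n+1) * ((2 + 2*(2*ε)) * (2*(2*ε)))) ^ s ≤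
    ((((n:ℝ)+1)*2*(1+E))^(n+1) * ((8:ℝ)^((n+1)*s) * ((2+4*E)*4)^s)) *
      ((2:ℝ) ^ (m*(n+1)*(s+1)) * ε ^ (s - (n+1))) := by
  have hE : 0 < E := lt_of_lt_of_le hε hεE
  set X : ℝ := 2^m with hX
  have hXpos : (0:ℝ) < X := by positivity
  have hX1 : (1:ℝ) ≤ X := one_le_pow₀ (by norm_num)
  set D1 : ℝ := ((n:ℝ)+1)*2*(1+E) with hD1
  set D2 : ℝ := (2+4*E)*4 with hD2
  have hN : ((⌈((n:ℝ)+1) * (((2:ℤ)^(m+1) : ℤ) : ℝ) / ε⌉₊ : ℝ)) ≤ D1 * X / ε := by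
    have hTz : (((2:ℤ)^(m+1) : ℤ) : ℝ) = 2 * X := by push_cast; ring
    rw [hTz]
    have harg : (0:ℝ) ≤ ((n:ℝ)+1) * (2*X) / ε := by positivity
    have h1 := (Nat.ceil_lt_add_one harg).le
    have h2 : ((n:ℝ)+1) * (2*X) / ε + 1 ≤ D1 * X / ε := by
      rw [div_add' _ _ _ (ne_of_gt hε), div_le_div_iff₀ hε hε]
      have hone : (1:ℝ) ≤ ((n:ℝ)+1) * (2*X) := by nlinarith
      have h3 : E ≤ ((n:ℝ)+1)*(2*X)*E := le_mul_of_one_le_left hE.le hone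
      have key : ((n:ℝ)+1)*(2*X) + ε ≤ D1*X := by rw [hD1]; nlinarith
      nlinarith [mul_le_mul_of_nonneg_right key hε.le]
    linarith
  have hK : (((2*2^(m+1)+1 : ℤ).toNat : ℝ)) ≤ 8 * X := by
    have hnn : (0:ℤ) ≤ 2*2^(m+1)+1 := by positivity
    have heq : (((2*2^(m+1)+1 : ℤ).toNat : ℝ)) = ((2*2^(m+1)+1 : ℤ) : ℝ) := by
      exact_mod_cast Int.toNat_of_nonneg hnn
    have hp : (2:ℝ)^(m+1) = 2*X := by rw [hX, pow_succ]; ring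
    rw [heq]
    push_cast
    rw [hp]
    linarith
  have hC : (2 + 2*(2*ε)) * (2*(2*ε)) ≤ D2 * ε := by
    rw [hD2]; nlinarith
  have hCnn : (0:ℝ) ≤ (2 + 2*(2*ε)) * (2*(2*ε)) := by positivity
  have hKnn : (0:ℝ) ≤ (((2*2^(m+1)+1 : ℤ).toNat : ℝ)) := Nat.cast_nonneg _
  have hXpow : (2:ℝ) ^ (m*(n+1)*(s+1)) = X^(n+1) * (X^(n+1))^s := by
    rw [hX, ← pow_mul, ← pow_mul, ← pow_add]
    congr 1
    ring
  have hD1pos : 0 < D1 := by rw [hD1]; positivity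
  clear_value X D1 D2
  calc ((⌈((n:ℝ)+1) * (((2:ℤ)^(m+1) : ℤ) : ℝ) / ε⌉₊ : ℝ)) ^ (n+1) *
      ((((2*2^(m+1)+1 : ℤ).toNat : ℝ)) ^ (n+1) * ((2 + 2*(2*ε)) * (2*(2*ε)))) ^ s
      ≤ (D1 * X / ε) ^ (n+1) * ((8*X) ^ (n+1) * (D2 * ε)) ^ s := by
        gcongr
    _ = (D1^(n+1) * ((8:ℝ)^((n+1)*s) * D2^s)) *
        ((X^(n+1) * (X^(n+1))^s) * (ε^s / ε^(n+1))) := by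
        rw [pow_mul]
        simp only [div_eq_mul_inv, mul_pow, inv_pow]
        ring
    _ = (D1^(n+1) * ((8:ℝ)^((n+1)*s) * D2^s)) *
      ((2:ℝ) ^ (m*(n+1)*(s+1)) * ε ^ (s - (n+1))) := by
        have hdiv : ε^s / ε^(n+1) = ε^(s-(n+1)) := (pow_sub₀ ε (ne_of_gt hε) (by omega)).symm
        rw [hdiv, hXpow]


/-- **Metric theory of uniformly Diophantine tuples.** If `s ≥ d + 1` and `Φ` is
non-increasing with limit `0`, with `liminf_{T→∞} Φ(2T)/Φ(T) > 0` and
`∑ 2^{m d (s+1)} Φ(2^m)^{s-d} < ∞`, then almost every `Θ ∈ (ℝ^d)^s` is uniformly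
Diophantine of type `c·Φ` for some `c = c(Θ) > 0`. -/
theorem ae_uniformly_diophantine
    {d s : ℕ} (hd : 1 ≤ d) (hs : d + 1 ≤ s)
    (Φ : ℝ → ℝ) (hmono : AntitoneOn Φ (Set.Ici 1))
    (hpos : ∀ x : ℝ, 1 ≤ x → 0 < Φ x)
    (hlim : Filter.Tendsto Φ Filter.atTop (nhds 0))
    (hliminf : 0 < Filter.liminf (fun T : ℝ => Φ (2 * T) / Φ T) Filter.atTop)
    (hsum : Summable (fun m : ℕ => (2 : ℝ) ^ (m * d * (s + 1)) * Φ ((2 : ℝ) ^ m) ^ (s - d))) :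
    ∀ᵐ θ ∂(volume : Measure (Fin s → Fin d → ℝ)),
      ∃ c > (0 : ℝ), UniformlyDiophantine d s (fun T => c * Φ T) θ := by
  obtain ⟨n, rfl⟩ : ∃ n, d = n + 1 := ⟨d - 1, by omega⟩
  have hs' : n + 2 ≤ s := by omega
  classical
  have h2m1 : ∀ m : ℕ, (1:ℝ) ≤ (2:ℝ)^m := fun m => one_le_pow₀ (by norm_num)
  have hεpos : ∀ m : ℕ, 0 < Φ ((2:ℝ)^m) := fun m => hpos _ (h2m1 m)
  have hεE : ∀ m : ℕ, Φ ((2:ℝ)^m) ≤ Φ 1 :=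
    fun m => hmono (mem_Ici.mpr le_rfl) (mem_Ici.mpr (h2m1 m)) (h2m1 m)
  set E : ℝ := Φ 1 with hEdef
  have hEpos : 0 < E := hpos 1 le_rfl
  set B : ℕ → Set (Fin s → Fin (n+1) → ℝ) := fun m =>
    {θ | ∃ ξ : Fin (n+1) → ℝ, ∀ i, ∃ u : Fin (n+1) → ℤ, u ≠ 0 ∧
      (∀ j, (|u j| : ℝ) ≤ (((2:ℤ)^(m+1) : ℤ) : ℝ)) ∧
      intDist (∑ j, (u j : ℝ) * (ξ j - θ i j)) < Φ ((2:ℝ)^m)} with hBdef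
  set Q : (Fin s → Fin (n+1) → ℤ) → Set (Fin s → Fin (n+1) → ℝ) := fun q =>
    {θ | ∀ i j, θ i j ∈ Set.Ico ((q i j : ℝ)) ((q i j : ℝ) + 1)} with hQdef
  set Creal : ℝ := ((((n:ℝ)+1)*2*(1+E))^(n+1) * ((8:ℝ)^((n+1)*s) * ((2+4*E)*4)^s)) with hCdef
  have hCnn : 0 ≤ Creal := by rw [hCdef]; positivity
  have cast_helper : ∀ (a b : ℕ) (x : ℝ), 0 ≤ x → ∀ s' : ℕ,
      ((a:ℕ):ℝ≥0∞) * (((b:ℕ):ℝ≥0∞) * ENNReal.ofReal x)^s' = ENNReal.ofReal ((a:ℝ) * ((b:ℝ)*x)^s') := by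
    intro a b x hx s'
    rw [ENNReal.ofReal_mul (by positivity), ENNReal.ofReal_pow (by positivity),
      ENNReal.ofReal_mul (by positivity), ENNReal.ofReal_natCast, ENNReal.ofReal_natCast]
  -- measure bound for each cube
  have hkey : ∀ (q : Fin s → Fin (n+1) → ℤ) (m : ℕ),
      volume (B m ∩ Q q) ≤ ENNReal.ofReal
        (Creal * ((2:ℝ) ^ (m*(n+1)*(s+1)) * Φ ((2:ℝ)^m) ^ (s - (n+1)))) := by
    intro q m
    have hεm0 : 0 < Φ ((2:ℝ)^m) := hεpos m
    have hTz1 : (1:ℤ) ≤ (2:ℤ)^(m+1) := one_le_pow₀ (by norm_num)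
    have hTzR : (0:ℝ) < (((2:ℤ)^(m+1) : ℤ) : ℝ) := by exact_mod_cast hTz1
    set N : ℕ := ⌈((n:ℝ)+1) * (((2:ℤ)^(m+1) : ℤ) : ℝ) / Φ ((2:ℝ)^m)⌉₊ with hN
    have hargpos : 0 < ((n:ℝ)+1) * (((2:ℤ)^(m+1) : ℤ) : ℝ) / Φ ((2:ℝ)^m) :=
      div_pos (mul_pos (by positivity) hTzR) hεm0
    have hN1 : 1 ≤ N := Nat.ceil_pos.mpr hargpos
    have hNge : ((n:ℝ)+1) * (((2:ℤ)^(m+1) : ℤ) : ℝ) / Φ ((2:ℝ)^m) ≤ (N:ℝ) := Nat.le_ceil _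
    have hsub : B m ∩ Q q ⊆ {θ : Fin s → Fin (n+1) → ℝ |
        (∀ i j, θ i j ∈ Set.Ico ((q i j : ℝ)) ((q i j : ℝ) + 1)) ∧
        ∃ ξ : Fin (n+1) → ℝ, ∀ i, ∃ u : Fin (n+1) → ℤ, u ≠ 0 ∧
          (∀ j, (|u j| : ℝ) ≤ (((2:ℤ)^(m+1) : ℤ) : ℝ)) ∧
          intDist (∑ j, (u j : ℝ) * (ξ j - θ i j)) < Φ ((2:ℝ)^m)} := by
      rintro θ ⟨h1, h2⟩
      exact ⟨h2, h1⟩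
    have hx0 : (0:ℝ) ≤ (2 + 2 * (2*Φ ((2:ℝ)^m))) * (2 * (2*Φ ((2:ℝ)^m))) := by positivity
    calc volume (B m ∩ Q q)
        ≤ volume {θ : Fin s → Fin (n+1) → ℝ |
          (∀ i j, θ i j ∈ Set.Ico ((q i j : ℝ)) ((q i j : ℝ) + 1)) ∧
          ∃ ξ : Fin (n+1) → ℝ, ∀ i, ∃ u : Fin (n+1) → ℤ, u ≠ 0 ∧
            (∀ j, (|u j| : ℝ) ≤ (((2:ℤ)^(m+1) : ℤ) : ℝ)) ∧
            intDist (∑ j, (u j : ℝ) * (ξ j - θ i j)) < Φ ((2:ℝ)^m)} := measure_mono hsub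
      _ ≤ ((N ^ (n+1) : ℕ) : ℝ≥0∞) *
          ((((2*(2:ℤ)^(m+1)+1).toNat ^ (n+1) : ℕ) : ℝ≥0∞) *
            ENNReal.ofReal ((2 + 2 * (2*Φ ((2:ℝ)^m))) * (2 * (2*Φ ((2:ℝ)^m))))) ^ s :=
          Bm_vol (Φ ((2:ℝ)^m)) hεm0 ((2:ℤ)^(m+1)) hTz1 _ N hN1 hNge
      _ = ENNReal.ofReal (((N ^ (n+1) : ℕ) : ℝ) *
          ((((2*(2:ℤ)^(m+1)+1).toNat ^ (n+1) : ℕ) : ℝ) *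
            ((2 + 2 * (2*Φ ((2:ℝ)^m))) * (2 * (2*Φ ((2:ℝ)^m))))) ^ s) :=
          cast_helper _ _ _ hx0 s
      _ ≤ ENNReal.ofReal (Creal * ((2:ℝ) ^ (m*(n+1)*(s+1)) * Φ ((2:ℝ)^m) ^ (s - (n+1)))) := by
          apply ENNReal.ofReal_le_ofReal
          have hrb := real_bound hs' E (Φ ((2:ℝ)^m)) hεm0 (hεE m) m
          rw [hCdef, hN]
          push_cast
          push_cast at hrb
          exact hrb
  -- Borel-Cantelli for each cube
  have hBC : ∀ q : Fin s → Fin (n+1) → ℤ,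
      volume (Filter.limsup (fun m => B m ∩ Q q) Filter.atTop) = 0 := by
    intro q
    apply measure_limsup_atTop_eq_zero
    have hsum2 : Summable (fun m : ℕ =>
        Creal * ((2:ℝ) ^ (m*(n+1)*(s+1)) * Φ ((2:ℝ)^m) ^ (s - (n+1)))) := hsum.mul_left Creal
    have hnn : ∀ m : ℕ, 0 ≤ Creal * ((2:ℝ) ^ (m*(n+1)*(s+1)) * Φ ((2:ℝ)^m) ^ (s - (n+1))) := by
      intro m
      have := (hεpos m).le
      positivity
    have h1 : ∑' m, volume (B m ∩ Q q)
        ≤ ENNReal.ofReal (∑' m, Creal * ((2:ℝ) ^ (m*(n+1)*(s+1)) * Φ ((2:ℝ)^m) ^ (s - (n+1)))) := by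
      calc ∑' m, volume (B m ∩ Q q)
          ≤ ∑' m, ENNReal.ofReal (Creal * ((2:ℝ) ^ (m*(n+1)*(s+1)) * Φ ((2:ℝ)^m) ^ (s - (n+1)))) :=
            ENNReal.tsum_le_tsum (hkey q)
        _ = ENNReal.ofReal (∑' m, Creal * ((2:ℝ) ^ (m*(n+1)*(s+1)) * Φ ((2:ℝ)^m) ^ (s - (n+1)))) :=
            (ENNReal.ofReal_tsum_of_nonneg hnn hsum2).symm
    exact ne_top_of_le_ne_top ENNReal.ofReal_ne_top h1
  -- almost everywhere statement
  have hae : ∀ᵐ θ ∂(volume : Measure (Fin s → Fin (n+1) → ℝ)),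
      ∀ q : Fin s → Fin (n+1) → ℤ, θ ∉ Filter.limsup (fun m => B m ∩ Q q) Filter.atTop := by
    rw [MeasureTheory.ae_all_iff]
    intro q
    exact measure_eq_zero_iff_ae_notMem.mp (hBC q)
  filter_upwards [hae] with θ hθ
  have hQmem : θ ∈ Q (fun i j => ⌊θ i j⌋) := by
    intro i j
    exact ⟨Int.floor_le _, Int.lt_floor_add_one _⟩
  have hfreq := hθ (fun i j => ⌊θ i j⌋)
  rw [Filter.mem_limsup_iff_frequently_mem, Filter.not_frequently] at hfreq
  have hev : ∀ᶠ m in Filter.atTop, θ ∉ B m :=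
    hfreq.mono (fun m hm hBm => hm ⟨hBm, hQmem⟩)
  obtain ⟨M, hM⟩ := Filter.eventually_atTop.mp hev
  refine ⟨min 1 (Φ ((2:ℝ)^M) / Φ 1), lt_min one_pos (div_pos (hεpos M) hEpos), ?_⟩
  intro T hT ξ
  set k : ℕ := ⌊Real.logb 2 T⌋₊ with hk
  set m : ℕ := max M k with hmdef
  have hTpos : (0:ℝ) < T := lt_of_lt_of_le one_pos hT
  have hlb0 : 0 ≤ Real.logb 2 T := Real.logb_nonneg (by norm_num) hT
  have h2k : (2:ℝ)^k ≤ T := by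
    calc (2:ℝ)^k = (2:ℝ)^(k:ℝ) := by rw [Real.rpow_natCast]
      _ ≤ (2:ℝ)^(Real.logb 2 T) :=
        Real.rpow_le_rpow_of_exponent_le one_le_two (Nat.floor_le hlb0)
      _ = T := Real.rpow_logb (by norm_num) (by norm_num) hTpos
  have hTk : T ≤ (2:ℝ)^(k+1) := by
    calc T = (2:ℝ)^(Real.logb 2 T) := (Real.rpow_logb (by norm_num) (by norm_num) hTpos).symm
      _ ≤ (2:ℝ)^((k:ℝ)+1) :=
        Real.rpow_le_rpow_of_exponent_le one_le_two (Nat.lt_floor_add_one _).le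
      _ = (2:ℝ)^(k+1) := by rw [← Real.rpow_natCast (2:ℝ) (k+1)]; push_cast; ring_nf
  have hTm : T ≤ (2:ℝ)^(m+1) := by
    refine le_trans hTk ?_
    apply pow_le_pow_right₀ one_le_two
    omega
  have hBm := hM m (le_max_left M k)
  simp only [hBdef, Set.mem_setOf_eq] at hBm
  push_neg at hBm
  obtain ⟨i, hi⟩ := hBm ξ
  refine ⟨i, fun u hu0 hub => ?_⟩
  have hub' : ∀ j, (|u j| : ℝ) ≤ (((2:ℤ)^(m+1) : ℤ) : ℝ) := by
    intro j
    have hcast : (((2:ℤ)^(m+1) : ℤ) : ℝ) = (2:ℝ)^(m+1) := by push_cast; ring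
    rw [hcast]
    exact le_trans (hub j) hTm
  have hgoal : min 1 (Φ ((2:ℝ)^M) / Φ 1) * Φ T ≤ Φ ((2:ℝ)^m) := by
    have hΦT0 : 0 < Φ T := hpos T hT
    rcases le_or_gt ((2:ℝ)^m) T with hcase | hcase
    · have hmono' : Φ T ≤ Φ ((2:ℝ)^m) :=
        hmono (mem_Ici.mpr (h2m1 m)) (mem_Ici.mpr hT) hcase
      calc min 1 (Φ ((2:ℝ)^M) / Φ 1) * Φ T ≤ 1 * Φ T :=
            mul_le_mul_of_nonneg_right (min_le_left _ _) hΦT0.le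
        _ = Φ T := one_mul _
        _ ≤ Φ ((2:ℝ)^m) := hmono'
    · have hkm : k < m := by
        have : (2:ℝ)^k < (2:ℝ)^m := lt_of_le_of_lt h2k hcase
        exact (pow_lt_pow_iff_right₀ one_lt_two).mp this
      have hmM : m = M := by
        rcases max_choice M k with h | h
        · exact h
        · omega
      have hΦT1 : Φ T ≤ Φ 1 := hmono (mem_Ici.mpr le_rfl) (mem_Ici.mpr hT) hT
      calc min 1 (Φ ((2:ℝ)^M) / Φ 1) * Φ T ≤ (Φ ((2:ℝ)^M) / Φ 1) * Φ T :=
            mul_le_mul_of_nonneg_right (min_le_right _ _) hΦT0.le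
        _ ≤ (Φ ((2:ℝ)^M) / Φ 1) * Φ 1 :=
            mul_le_mul_of_nonneg_left hΦT1 (div_nonneg (hεpos M).le hEpos.le)
        _ = Φ ((2:ℝ)^M) := div_mul_cancel₀ _ (ne_of_gt hEpos)
        _ = Φ ((2:ℝ)^m) := by rw [hmM]
  exact le_trans hgoal (hi u hu0 hub')

end
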